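/- Assume (A1)–(A3) hold with tail index α ∈ (1, 2), and let h be a function as in (A2) which additionally satisfies max{z₀, 0} < h(t) < t/2 for all t > max{2z₀, 0}. Define ε₂(t) := (1/|E X|) ∫_{−∞}^{−h(t)} F̄(t−s)·F(s) ds. Then ε₂(t) = o(t·F̄(t)²) as t → ∞. -/

import Mathlib

open MeasureTheory ProbabilityTheory Filter Set
open scoped ENNReal

/-- Under (A1)–(A3) with `α ∈ (1,2)` and `h` as in (A2) with
`max{z₀,0} < h(t) < t/2` for `t > max{2z₀,0}`, the error term `ε₂` satisfies
`ε₂(t) = o(t·F̄(t)²)` as `t → ∞`. -/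
theorem stmt6
    {Ω : Type*} [MeasurableSpace Ω] (P : Measure Ω) [IsProbabilityMeasure P]
    (X Z : Ω → ℝ) (hXm : Measurable X) (hZm : Measurable Z)
    (hXint : Integrable X P) (hXmean : ∫ ω, X ω ∂P < 0)
    (hXsupp : ∀ t : ℝ, 0 < P {ω | X ω > t})
    (Fbar F : ℝ → ℝ)
    (hFbar : ∀ t, Fbar t = (P {ω | X ω > t}).toReal)
    (hF : ∀ t, F t = (P {ω | X ω ≤ t}).toReal)
    (hindep : IndepFun X Z P)
    (hZlaw : ∀ t : ℝ, (P {ω | Z ω > t}).toReal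
        = min 1 ((1 / |∫ ω, X ω ∂P|) * ∫ s in Set.Ioi t, Fbar s))
    (z0 : ℝ) (hz0 : z0 = sInf {t : ℝ | P {ω | Z ω > t} < 1})
    (α : ℝ) (hα1 : 1 < α) (hα2 : α < 2)
    (hA1 : ∀ u : ℝ, 0 < u →
      Tendsto (fun t => Fbar (u * t) / Fbar t) atTop (nhds (u ^ (-α))))
    (hA3 : ∃ f : ℝ → ℝ, Continuous f ∧ (∀ x, 0 ≤ f x) ∧
      P.map X = volume.withDensity (fun x => ENNReal.ofReal (f x)) ∧
      ∀ u : ℝ, 0 < u →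
        Tendsto (fun t => f (u * t) / f t) atTop (nhds (u ^ (-(α + 1)))))
    (h : ℝ → ℝ)
    (hhtop : Tendsto h atTop atTop) (hho : h =o[atTop] (fun t => t))
    (hhA2 : (fun t => ∫ s in Set.Ioi (h t), (P {ω | X ω ≤ -s}).toReal) =o[atTop]
        fun t => t * Fbar t)
    (hhb : ∀ t > max (2 * z0) 0, max z0 0 < h t ∧ h t < t / 2)
    (e2 : ℝ → ℝ)
    (he2 : ∀ t, e2 t = (1 / |∫ ω, X ω ∂P|)
        * ∫ s in Set.Iio (-(h t)), Fbar (t - s) * F s) :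
    e2 =o[atTop] fun t => t * Fbar t ^ 2 := by
  have hEXne : (∫ ω, X ω ∂P) ≠ 0 := ne_of_lt hXmean
  have hEX : 0 < |∫ ω, X ω ∂P| := abs_pos.mpr hEXne
  set c : ℝ := 1 / |∫ ω, X ω ∂P| with hcdef
  have hcpos : 0 < c := by positivity
  -- basic properties of F and Fbar
  have hFnn : ∀ s, 0 ≤ F s := fun s => (hF s) ▸ ENNReal.toReal_nonneg
  have hFbnn : ∀ s, 0 ≤ Fbar s := fun s => (hFbar s) ▸ ENNReal.toReal_nonneg
  have hFmono : Monotone F := by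
    intro s s' hss'
    rw [hF s, hF s']
    exact ENNReal.toReal_le_toReal (measure_ne_top _ _) (measure_ne_top _ _) |>.mpr
      (measure_mono fun ω hω => le_trans hω hss')
  have hFbanti : Antitone Fbar := by
    intro s s' hss'
    rw [hFbar s, hFbar s']
    exact ENNReal.toReal_le_toReal (measure_ne_top _ _) (measure_ne_top _ _) |>.mpr
      (measure_mono fun ω hω => lt_of_le_of_lt hss' hω)
  have hFm : Measurable F := hFmono.measurable
  have hFbm : Measurable Fbar := hFbanti.measurable
  have hFble : ∀ s, Fbar s ≤ 1 := by
    intro s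
    rw [hFbar s]
    exact ENNReal.toReal_le_of_le_ofReal one_pos.le (by simpa using prob_le_one)
  -- integrability of F on Iio 0
  have hFenorm : ∀ s : ℝ, (‖F s‖₊ : ℝ≥0∞) = P {ω | X ω ≤ s} := by
    intro s
    rw [← enorm_eq_nnnorm, Real.enorm_eq_ofReal (hFnn s), hF s, ENNReal.ofReal_toReal (measure_ne_top _ _)]
  have hFint : IntegrableOn F (Iio (0 : ℝ)) := by
    refine ⟨hFm.aestronglyMeasurable, ?_⟩
    rw [HasFiniteIntegral]
    set f : Ω → ℝ := fun ω => max (1 - X ω) 0 with hfdef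
    have hfm : Measurable f := (measurable_const.sub hXm).max measurable_const
    have hfnn : ∀ ω, 0 ≤ f ω := fun ω => le_max_right _ _
    -- pointwise bound: {X ≤ s} ⊆ {-s < f}
    have hsub : ∀ s : ℝ, P {ω | X ω ≤ s} ≤ P {ω | -s < f ω} := by
      intro s
      refine measure_mono fun ω hω => ?_
      have : 1 - X ω ≤ f ω := le_max_left _ _
      simp only [mem_setOf_eq] at hω ⊢
      linarith
    calc ∫⁻ s in Iio (0 : ℝ), ‖F s‖₊
        = ∫⁻ s in Iio (0 : ℝ), P {ω | X ω ≤ s} := by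
          apply lintegral_congr; intro s; exact hFenorm s
      _ ≤ ∫⁻ s in Iio (0 : ℝ), P {ω | -s < f ω} := lintegral_mono fun s => hsub s
      _ = ∫⁻ s in Ioi (0 : ℝ), P {ω | s < f ω} := by
          have key := (Measure.measurePreserving_neg (volume : Measure ℝ)).setLIntegral_comp_preimage_emb
            measurableEmbedding_neg (fun s => P {ω | s < f ω}) (Ioi 0)
          have hpre : (Neg.neg : ℝ → ℝ) ⁻¹' (Ioi 0) = Iio 0 := by
            ext x; simp
          rw [hpre] at key
          exact key
      _ = ∫⁻ ω, ENNReal.ofReal (f ω) ∂P :=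
          (lintegral_eq_lintegral_meas_lt P (Eventually.of_forall hfnn)
            hfm.aemeasurable).symm
      _ ≤ ∫⁻ ω, (‖X ω‖₊ + 1 : ℝ≥0∞) ∂P := by
          refine lintegral_mono fun ω => ?_
          have h1 : f ω ≤ |X ω| + 1 := by
            have := abs_nonneg (X ω)
            have := neg_abs_le (X ω)
            simp only [hfdef]
            apply max_le <;> linarith
          calc ENNReal.ofReal (f ω) ≤ ENNReal.ofReal (|X ω| + 1) := ENNReal.ofReal_le_ofReal h1
            _ = ENNReal.ofReal |X ω| + ENNReal.ofReal 1 :=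
                ENNReal.ofReal_add (abs_nonneg _) one_pos.le
            _ = (‖X ω‖₊ + 1 : ℝ≥0∞) := by
                rw [ENNReal.ofReal_one, ← enorm_eq_nnnorm, ← ofReal_norm, Real.norm_eq_abs]
      _ < ⊤ := by
          rw [lintegral_add_right _ measurable_const]
          simp only [lintegral_const, measure_univ, mul_one]
          exact ENNReal.add_lt_top.mpr ⟨hXint.2, ENNReal.one_lt_top⟩
  -- main little-o argument
  rw [Asymptotics.isLittleO_iff]
  intro ε hε
  have hε' : 0 < ε * |∫ ω, X ω ∂P| := mul_pos hε hEX
  filter_upwards [hhA2.def hε', hhtop.eventually_gt_atTop 0, eventually_gt_atTop (0 : ℝ)]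
    with t hA2t hht ht
  -- integrability on Iio (-(h t))
  have hFintt : IntegrableOn F (Iio (-(h t))) :=
    hFint.mono_set (Iio_subset_Iio (by linarith))
  have hmeas : Measurable fun s => Fbar (t - s) * F s :=
    (hFbm.comp (measurable_const.sub measurable_id)).mul hFm
  have hprod : IntegrableOn (fun s => Fbar (t - s) * F s) (Iio (-(h t))) := by
    refine Integrable.mono' hFintt hmeas.aestronglyMeasurable ?_
    refine Eventually.of_forall fun s => ?_
    rw [Real.norm_eq_abs, abs_of_nonneg (mul_nonneg (hFbnn _) (hFnn _))]
    calc Fbar (t - s) * F s ≤ 1 * F s :=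
          mul_le_mul_of_nonneg_right (hFble _) (hFnn s)
      _ = F s := one_mul _
  -- pointwise comparison on the set
  have hIle : (∫ s in Iio (-(h t)), Fbar (t - s) * F s)
      ≤ Fbar t * ∫ s in Iio (-(h t)), F s := by
    calc (∫ s in Iio (-(h t)), Fbar (t - s) * F s)
        ≤ ∫ s in Iio (-(h t)), Fbar t * F s := by
          refine setIntegral_mono_on hprod (hFintt.const_mul _) measurableSet_Iio ?_
          intro s hs
          simp only [mem_Iio] at hs
          have : t ≤ t - s := by linarith
          exact mul_le_mul_of_nonneg_right (hFbanti this) (hFnn s)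
      _ = Fbar t * ∫ s in Iio (-(h t)), F s := integral_const_mul _ _
  -- identify the A2 integral
  have hGeq : (∫ s in Ioi (h t), (P {ω | X ω ≤ -s}).toReal)
      = ∫ s in Iio (-(h t)), F s := by
    have h1 : (∫ s in Ioi (h t), (P {ω | X ω ≤ -s}).toReal)
        = ∫ s in Ioi (h t), F (-s) := by
      apply setIntegral_congr_fun measurableSet_Ioi
      intro s _
      simp only [hF]
    rw [h1, integral_comp_neg_Ioi, integral_Iic_eq_integral_Iio]
  have hInn : 0 ≤ ∫ s in Iio (-(h t)), Fbar (t - s) * F s :=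
    setIntegral_nonneg measurableSet_Iio fun s _ => mul_nonneg (hFbnn _) (hFnn _)
  have hgnn : 0 ≤ ∫ s in Iio (-(h t)), F s :=
    setIntegral_nonneg measurableSet_Iio fun s _ => hFnn s
  -- from A2
  have hgle : (∫ s in Iio (-(h t)), F s) ≤ ε * |∫ ω, X ω ∂P| * (t * Fbar t) := by
    have h1 := hA2t
    rw [hGeq] at h1
    rw [Real.norm_eq_abs, abs_of_nonneg hgnn, Real.norm_eq_abs,
      abs_of_nonneg (mul_nonneg ht.le (hFbnn t))] at h1
    exact h1
  -- conclude
  have he2nn : 0 ≤ e2 t := by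
    rw [he2 t]; exact mul_nonneg hcpos.le hInn
  rw [Real.norm_eq_abs, abs_of_nonneg he2nn, Real.norm_eq_abs,
    abs_of_nonneg (mul_nonneg ht.le (pow_nonneg (hFbnn t) 2))]
  calc e2 t = c * ∫ s in Iio (-(h t)), Fbar (t - s) * F s := he2 t
    _ ≤ c * (Fbar t * ∫ s in Iio (-(h t)), F s) := by
        apply mul_le_mul_of_nonneg_left hIle hcpos.le
    _ ≤ c * (Fbar t * (ε * |∫ ω, X ω ∂P| * (t * Fbar t))) := by
        apply mul_le_mul_of_nonneg_left _ hcpos.le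
        exact mul_le_mul_of_nonneg_left hgle (hFbnn t)
    _ = ε * (t * Fbar t ^ 2) := by
        rw [hcdef]
        field_simp
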